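/- Shapley values for the area of the union of anchored rectangles: let P be a finite set of n points in the open positive quadrant of ℝ², with all x-coordinates pairwise distinct and all y-coordinates pairwise distinct. For a point p, let R_p = [0,x(p)] × [0,y(p)] be the axis-parallel rectangle spanned by the origin and p, and let v_ar(Q) = area(∪_{q∈Q} R_q) (Lebesgue measure) for Q ⊆ P, with v_ar(∅)=0. For z ∈ ℝ² define ne(z) = |{q ∈ P : x(q) ≥ x(z) and y(q) ≥ y(z)}|. Then for every p ∈ P, φ(p, v_ar) = ∫_{R_p} (1/ne(z)) dz, where the integral is with respect to Lebesgue measure on R_p (note ne(z) ≥ 1 for every z ∈ R_p since p itself is counted). -/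

import Mathlib

open MeasureTheory

open Finset

/-- The Shapley value of player `p` in the coalitional game with player set `P`
and characteristic function `v`. -/
noncomputable def shapley {α : Type*} [DecidableEq α] (P : Finset α) (v : Finset α → ℝ)
    (p : α) : ℝ :=
  if hp : p ∈ P then
    (∑ π : {x // x ∈ P} ≃ Fin P.card,
      (v ((P.attach.filter fun q => π q ≤ π ⟨p, hp⟩).image Subtype.val) -
        v (((P.attach.filter fun q => π q ≤ π ⟨p, hp⟩).image Subtype.val).erase p))) /
      (P.card).factorial
  else 0

section Helpers

lemma count_min {β : Type*} [Fintype β] [DecidableEq β] {n : ℕ} (hn : Fintype.card β = n)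
    (D : Finset β) (p : β) (hpD : p ∈ D) :
    (Finset.univ.filter (fun π : β ≃ Fin n => ∀ q ∈ D, q ≠ p → π p < π q)).card * D.card
      = n.factorial := by
  classical
  -- for each r, the set of permutations where r is the strict min of D
  set A : β → Finset (β ≃ Fin n) :=
    fun r => Finset.univ.filter (fun π : β ≃ Fin n => ∀ q ∈ D, q ≠ r → π r < π q) with hA
  have hcards : ∀ r ∈ D, (A r).card = (A p).card := by
    intro r hr
    apply Finset.card_bij' (fun π _ => (Equiv.swap p r).trans π) (fun π _ => (Equiv.swap p r).trans π)
    · intro π hπ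
      simp only [hA, Finset.mem_filter, Finset.mem_univ, true_and] at hπ ⊢
      intro q hq hqp
      rcases eq_or_ne q r with rfl | hqr
      · simpa [Equiv.swap_apply_left, Equiv.swap_apply_right] using hπ p hpD (Ne.symm hqp)
      · have := hπ q hq hqr
        simpa [Equiv.swap_apply_of_ne_of_ne hqp hqr, Equiv.swap_apply_right] using this
    · intro π hπ
      simp only [hA, Finset.mem_filter, Finset.mem_univ, true_and] at hπ ⊢
      intro q hq hqr
      rcases eq_or_ne q p with rfl | hqp
      · simpa [Equiv.swap_apply_left, Equiv.swap_apply_right] using hπ r hr (Ne.symm hqr)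
      · have := hπ q hq hqp
        simpa [Equiv.swap_apply_of_ne_of_ne hqp hqr, Equiv.swap_apply_left] using this
    · intro π _; ext x; simp
    · intro π _; ext x; simp
  -- partition: every permutation has a unique strict min over D
  have hpart : ∑ r ∈ D, (A r).card = n.factorial := by
    have hcard : Fintype.card (β ≃ Fin n) = n.factorial := by
      rw [Fintype.card_equiv (Fintype.equivFinOfCardEq hn), hn]
    have huniq : ∀ π : β ≃ Fin n,
        (D.filter (fun r => ∀ q ∈ D, q ≠ r → π r < π q)).card = 1 := by
      intro π
      obtain ⟨r, hr, hrmin⟩ := Finset.exists_min_image D π ⟨p, hpD⟩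
      rw [Finset.card_eq_one]
      refine ⟨r, ?_⟩
      ext r'
      simp only [Finset.mem_filter, Finset.mem_singleton]
      constructor
      · rintro ⟨hr', hmin'⟩
        by_contra hne
        exact absurd (hmin' r hr (Ne.symm hne)) (not_lt.2 (hrmin r' hr'))
      · rintro rfl
        refine ⟨hr, fun q hq hqr => lt_of_le_of_ne (hrmin q hq) ?_⟩
        exact fun h => hqr (π.injective h).symm
    calc ∑ r ∈ D, (A r).card
        = ∑ r ∈ D, ∑ π : β ≃ Fin n, if (∀ q ∈ D, q ≠ r → π r < π q) then 1 else 0 := by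
          refine Finset.sum_congr rfl fun r _ => ?_
          rw [hA, Finset.card_filter]
      _ = ∑ π : β ≃ Fin n, ∑ r ∈ D, if (∀ q ∈ D, q ≠ r → π r < π q) then 1 else 0 := by
          rw [Finset.sum_comm]
      _ = ∑ π : β ≃ Fin n, 1 := by
          refine Finset.sum_congr rfl fun π _ => ?_
          rw [← Finset.card_filter]; exact huniq π
      _ = n.factorial := by simp [← hcard, Finset.card_univ]
  calc (A p).card * D.card = ∑ r ∈ D, (A r).card := by
        rw [Finset.sum_congr rfl hcards, Finset.sum_const, smul_eq_mul, mul_comm]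
      _ = n.factorial := hpart


lemma U_meas (Q : Finset (ℝ × ℝ)) :
    MeasurableSet (⋃ q ∈ (Q : Set (ℝ × ℝ)), Set.Icc (0 : ℝ × ℝ) q) := by
  exact Set.Finite.measurableSet_biUnion Q.finite_toSet (fun q _ => measurableSet_Icc)

lemma U_fin (Q : Finset (ℝ × ℝ)) :
    volume (⋃ q ∈ (Q : Set (ℝ × ℝ)), Set.Icc (0 : ℝ × ℝ) q) < ⊤ := by
  refine lt_of_le_of_lt (measure_biUnion_finset_le Q _) ?_
  refine ENNReal.sum_lt_top.2 fun q _ => ?_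
  exact (isCompact_Icc).measure_lt_top

lemma vol_diff {A B : Set (ℝ × ℝ)} (hA : MeasurableSet A) (hB : MeasurableSet B)
    (hsub : A ⊆ B) (hfin : volume B < ⊤) :
    (volume B).toReal - (volume A).toReal
      = ∫ z, (B \ A).indicator (fun _ => (1:ℝ)) z := by
  rw [show (fun x : ℝ × ℝ => (B \ A).indicator (fun _ => (1:ℝ)) x) = (B \ A).indicator 1 from rfl,
    MeasureTheory.integral_indicator_one (hB.diff hA)]
  rw [measureReal_def, measure_diff hsub hA.nullMeasurableSet
    (ne_of_lt (lt_of_le_of_lt (measure_mono hsub) hfin))]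
  rw [ENNReal.toReal_sub_of_le (measure_mono hsub) (ne_of_lt hfin)]

end Helpers

theorem shapley_area_anchored_rectangles (P : Finset (ℝ × ℝ))
    (hpos : ∀ q ∈ P, 0 < q.1 ∧ 0 < q.2)
    (hx : ∀ q ∈ P, ∀ q' ∈ P, q ≠ q' → q.1 ≠ q'.1)
    (hy : ∀ q ∈ P, ∀ q' ∈ P, q ≠ q' → q.2 ≠ q'.2)
    (p : ℝ × ℝ) (hp : p ∈ P) :
    shapley P
      (fun Q => (volume (⋃ q ∈ (Q : Set (ℝ × ℝ)), Set.Icc (0 : ℝ × ℝ) q)).toReal) p =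
      ∫ z in Set.Icc (0 : ℝ × ℝ) p,
        1 / ((P.filter fun q => z.1 ≤ q.1 ∧ z.2 ≤ q.2).card : ℝ) := by
  classical
  set p' : {x // x ∈ P} := ⟨p, hp⟩ with hp'
  set U : Finset (ℝ × ℝ) → Set (ℝ × ℝ) :=
    fun Q => ⋃ q ∈ (Q : Set (ℝ × ℝ)), Set.Icc (0 : ℝ × ℝ) q with hU
  set S : ({x // x ∈ P} ≃ Fin P.card) → Finset (ℝ × ℝ) :=
    fun π => (P.attach.filter fun q => π q ≤ π p').image Subtype.val with hS
  set Dset : ({x // x ∈ P} ≃ Fin P.card) → Set (ℝ × ℝ) :=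
    fun π => U (S π) \ U ((S π).erase p) with hDset
  have hSmem : ∀ π (q : ℝ × ℝ), q ∈ S π ↔ ∃ hq : q ∈ P, π ⟨q, hq⟩ ≤ π p' := by
    intro π q
    simp [hS, Finset.mem_image, Finset.mem_filter]
  have hpS : ∀ π, p ∈ S π := fun π => (hSmem π p).2 ⟨hp, le_refl _⟩
  -- characterization of the marginal-contribution region
  have hchar : ∀ π z, z ∈ Dset π ↔
      (z ∈ Set.Icc (0 : ℝ × ℝ) p ∧
        ∀ q : {x // x ∈ P}, z ≤ q.1 → q.1 ≠ p → π p' < π q) := by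
    intro π z
    have hmemU : ∀ (Q : Finset (ℝ × ℝ)), z ∈ U Q ↔ ∃ q ∈ Q, 0 ≤ z ∧ z ≤ q := by
      intro Q; simp only [hU, Set.mem_iUnion, Finset.mem_coe, Set.mem_Icc, exists_prop]
    constructor
    · rintro ⟨hin, hout⟩
      obtain ⟨q0, hq0S, hz0, hzq0⟩ := (hmemU _).1 hin
      have hq0p : q0 = p := by
        by_contra hne
        exact hout ((hmemU _).2 ⟨q0, Finset.mem_erase.2 ⟨hne, hq0S⟩, hz0, hzq0⟩)
      subst hq0p
      refine ⟨Set.mem_Icc.2 ⟨hz0, hzq0⟩, fun q hzq hqp => ?_⟩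
      by_contra hlt
      push_neg at hlt
      have hqS : q.1 ∈ S π := (hSmem π q.1).2 ⟨q.2, by simpa using hlt⟩
      exact hout ((hmemU _).2 ⟨q.1, Finset.mem_erase.2 ⟨hqp, hqS⟩, hz0, hzq⟩)
    · rintro ⟨hIcc, hmin⟩
      obtain ⟨hz0, hzp⟩ := Set.mem_Icc.1 hIcc
      refine ⟨(hmemU _).2 ⟨p, hpS π, hz0, hzp⟩, fun hmem => ?_⟩
      obtain ⟨q0, hq0, hz0', hzq0⟩ := (hmemU _).1 hmem
      obtain ⟨hq0p, hq0S⟩ := Finset.mem_erase.1 hq0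
      obtain ⟨hq0P, hle⟩ := (hSmem π q0).1 hq0S
      exact absurd hle (not_le.2 (hmin ⟨q0, hq0P⟩ hzq0 hq0p))
  have hDsub : ∀ π, Dset π ⊆ Set.Icc (0 : ℝ × ℝ) p :=
    fun π z hz => ((hchar π z).1 hz).1
  have hDmeas : ∀ π, MeasurableSet (Dset π) := fun π => (U_meas _).diff (U_meas _)
  -- the marginal contribution of each permutation as an integral
  have hmarg : ∀ π : {x // x ∈ P} ≃ Fin P.card,
      (volume (U (S π))).toReal - (volume (U ((S π).erase p))).toReal
        = ∫ z, (Dset π).indicator (fun _ => (1:ℝ)) z := by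
    intro π
    refine vol_diff (U_meas _) (U_meas _) ?_ (U_fin _)
    refine Set.biUnion_subset_biUnion_left ?_
    exact_mod_cast fun q hq => Finset.erase_subset _ _ hq
  -- pointwise identity
  have hpoint : ∀ z : ℝ × ℝ,
      (∑ π : {x // x ∈ P} ≃ Fin P.card, (Dset π).indicator (fun _ => (1:ℝ)) z)
        / (P.card).factorial
      = (Set.Icc (0 : ℝ × ℝ) p).indicator
          (fun z => 1 / ((P.filter fun q => z.1 ≤ q.1 ∧ z.2 ≤ q.2).card : ℝ)) z := by
    intro z
    by_cases hz : z ∈ Set.Icc (0 : ℝ × ℝ) p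
    · -- inside the rectangle
      set Dz : Finset {x // x ∈ P} := Finset.univ.filter (fun q => z ≤ q.1) with hDz
      have hpDz : p' ∈ Dz := by
        simp only [hDz, Finset.mem_filter, Finset.mem_univ, true_and]
        exact (Set.mem_Icc.1 hz).2
      have hcount := count_min (Fintype.card_coe P) Dz p' hpDz
      have hDzcard : Dz.card = (P.filter fun q => z.1 ≤ q.1 ∧ z.2 ≤ q.2).card := by
        apply Finset.card_bij (fun q _ => q.1)
        · intro a ha
          simp only [hDz, Finset.mem_filter, Finset.mem_univ, true_and, Prod.le_def] at ha ⊢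
          exact ⟨a.2, ha⟩
        · intro a _ b _ h; exact Subtype.ext h
        · intro b hb
          simp only [Finset.mem_filter] at hb
          exact ⟨⟨b, hb.1⟩, by simp [hDz, Prod.le_def, hb.2], rfl⟩
      -- each indicator equals the boolean of the min condition
      have hterm : ∀ π : {x // x ∈ P} ≃ Fin P.card,
          (Dset π).indicator (fun _ => (1:ℝ)) z
            = if (∀ q ∈ Dz, q ≠ p' → π p' < π q) then (1:ℝ) else 0 := by
        intro π
        by_cases hc : ∀ q ∈ Dz, q ≠ p' → π p' < π q
        · rw [if_pos hc, Set.indicator_of_mem]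
          refine (hchar π z).2 ⟨hz, fun q hzq hqp => ?_⟩
          refine hc q ?_ (fun h => hqp (by rw [h]))
          simp only [hDz, Finset.mem_filter, Finset.mem_univ, true_and]; exact hzq
        · rw [if_neg hc, Set.indicator_of_notMem]
          intro hmem
          obtain ⟨-, hmin⟩ := (hchar π z).1 hmem
          refine hc fun q hq hqp' => ?_
          have hzq : z ≤ q.1 := by
            simpa [hDz, Finset.mem_filter] using hq
          exact hmin q hzq (fun h => hqp' (Subtype.ext h))
      rw [Finset.sum_congr rfl (fun π _ => hterm π), Finset.sum_boole,
        Set.indicator_of_mem hz]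
      -- arithmetic
      have hd0 : 0 < Dz.card := Finset.card_pos.2 ⟨p', hpDz⟩
      have hcastc : ((Finset.univ.filter
          (fun π : {x // x ∈ P} ≃ Fin P.card => ∀ q ∈ Dz, q ≠ p' → π p' < π q)).card : ℝ)
            * (Dz.card : ℝ) = ((P.card).factorial : ℝ) := by
        exact_mod_cast congrArg (Nat.cast (R := ℝ)) hcount
      rw [← hDzcard]
      have hfac : ((P.card).factorial : ℝ) ≠ 0 := Nat.cast_ne_zero.2 (Nat.factorial_ne_zero _)
      have hdne : (Dz.card : ℝ) ≠ 0 := Nat.cast_ne_zero.2 hd0.ne'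
      rw [div_eq_div_iff hfac hdne, one_mul]
      exact hcastc
    · -- outside the rectangle: everything vanishes
      have : ∀ π : {x // x ∈ P} ≃ Fin P.card,
          (Dset π).indicator (fun _ => (1:ℝ)) z = 0 :=
        fun π => Set.indicator_of_notMem (fun h => hz (hDsub π h)) _
      rw [Finset.sum_congr rfl (fun π _ => this π), Set.indicator_of_notMem hz]
      simp
  -- put everything together
  rw [shapley, dif_pos hp]
  have hInt : ∀ π : {x // x ∈ P} ≃ Fin P.card,
      Integrable ((Dset π).indicator (fun _ => (1:ℝ))) volume := by
    intro π
    rw [integrable_indicator_iff (hDmeas π)]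
    exact integrableOn_const (ne_of_lt (lt_of_le_of_lt
      (measure_mono (Set.diff_subset)) (U_fin _)))
  calc (∑ π : {x // x ∈ P} ≃ Fin P.card,
          ((volume (U (S π))).toReal - (volume (U ((S π).erase p))).toReal))
          / (P.card).factorial
      = (∫ z, ∑ π : {x // x ∈ P} ≃ Fin P.card,
          (Dset π).indicator (fun _ => (1:ℝ)) z) / (P.card).factorial := by
        rw [integral_finset_sum _ (fun π _ => hInt π)]
        rw [Finset.sum_congr rfl (fun π _ => hmarg π)]
    _ = ∫ z, (∑ π : {x // x ∈ P} ≃ Fin P.card,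
          (Dset π).indicator (fun _ => (1:ℝ)) z) / (P.card).factorial := by
        rw [integral_div]
    _ = ∫ z, (Set.Icc (0 : ℝ × ℝ) p).indicator
          (fun z => 1 / ((P.filter fun q => z.1 ≤ q.1 ∧ z.2 ≤ q.2).card : ℝ)) z := by
        exact integral_congr_ae (Filter.Eventually.of_forall hpoint)
    _ = ∫ z in Set.Icc (0 : ℝ × ℝ) p,
          1 / ((P.filter fun q => z.1 ≤ q.1 ∧ z.2 ≤ q.2).card : ℝ) := by
        rw [integral_indicator measurableSet_Icc]
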